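/- The Gairing optimal covering mechanism f*(j) = (j-1)! * (1/((n-1)*(n-1)!) + Σ_{i=j}^{n-1} 1/i!) / (1/((n-1)*(n-1)!) + Σ_{i=1}^{n-1} 1/i!) satisfies f*(1) = 1 and is nonincreasing on [1, n]. -/

import Mathlib

/-- The Gairing optimal covering mechanism. -/
noncomputable def gairing (n j : ℕ) : ℝ :=
  (Nat.factorial (j - 1) : ℝ) *
    (1 / (((n - 1 : ℕ) : ℝ) * (Nat.factorial (n - 1) : ℝ)) +
      ∑ i ∈ Finset.Icc j (n - 1), (1 : ℝ) / (Nat.factorial i : ℝ)) /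
    (1 / (((n - 1 : ℕ) : ℝ) * (Nat.factorial (n - 1) : ℝ)) +
      ∑ i ∈ Finset.Icc 1 (n - 1), (1 : ℝ) / (Nat.factorial i : ℝ))

lemma gairing_key (j : ℕ) (hj : 1 ≤ j) :
    ∀ m, j ≤ m →
      1 / ((m : ℝ) * (Nat.factorial m : ℝ)) +
        ∑ i ∈ Finset.Icc (j + 1) m, (1 : ℝ) / (Nat.factorial i : ℝ) ≤
      1 / ((j : ℝ) * (Nat.factorial j : ℝ)) := by
  intro m hm
  induction m, hm using Nat.le_induction with
  | base => simp
  | succ m hm ih =>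
    have hsum : ∑ i ∈ Finset.Icc (j + 1) (m + 1), (1 : ℝ) / (Nat.factorial i : ℝ) =
        (∑ i ∈ Finset.Icc (j + 1) m, (1 : ℝ) / (Nat.factorial i : ℝ)) +
          1 / (Nat.factorial (m + 1) : ℝ) := by
      rw [Finset.sum_Icc_succ_top (by omega)]
    have hx : (1 : ℝ) ≤ (m : ℝ) := by exact_mod_cast hm.trans' hj
    have hf : (1 : ℝ) ≤ (Nat.factorial m : ℝ) := by
      exact_mod_cast Nat.one_le_iff_ne_zero.mpr (Nat.factorial_ne_zero m)
    have hstep : 1 / (((m : ℕ) + 1 : ℝ) * (Nat.factorial (m + 1) : ℝ)) +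
        1 / (Nat.factorial (m + 1) : ℝ) ≤ 1 / ((m : ℝ) * (Nat.factorial m : ℝ)) := by
      have : (Nat.factorial (m + 1) : ℝ) = ((m : ℝ) + 1) * (Nat.factorial m : ℝ) := by
        rw [Nat.factorial_succ]; push_cast; ring
      have hx0 : (0:ℝ) < (m:ℝ) := by linarith
      have hf0 : (0:ℝ) < (Nat.factorial m : ℝ) := by linarith
      have h1 : (0:ℝ) < ((m:ℝ)+1) * (((m:ℝ)+1) * (Nat.factorial m : ℝ)) := by positivity
      have h2 : (0:ℝ) < ((m:ℝ)+1) * (Nat.factorial m : ℝ) := by positivity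
      have h3 : (0:ℝ) < (m:ℝ) * (Nat.factorial m : ℝ) := by positivity
      rw [this]
      rw [div_add_div _ _ (ne_of_gt h1) (ne_of_gt h2), div_le_div_iff₀ (by positivity) h3]
      nlinarith
    have := ih
    push_cast at hstep ⊢
    rw [hsum]
    linarith
  
theorem stmt_12 (n : ℕ) (hn : 2 ≤ n) :
    gairing n 1 = 1 ∧
      ∀ j, 1 ≤ j → j + 1 ≤ n → gairing n (j + 1) ≤ gairing n j := by
  obtain ⟨m, rfl⟩ : ∃ m, n = m + 1 := ⟨n - 1, by omega⟩
  have hm : 1 ≤ m := by omega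
  have hmn : (m + 1) - 1 = m := by omega
  have hxm : (1 : ℝ) ≤ (m : ℝ) := by exact_mod_cast hm
  have hfm : (1 : ℝ) ≤ (Nat.factorial m : ℝ) := by
    exact_mod_cast Nat.one_le_iff_ne_zero.mpr (Nat.factorial_ne_zero m)
  have hA : 0 < 1 / ((m : ℝ) * (Nat.factorial m : ℝ)) := by positivity
  have hD : 0 < 1 / ((m : ℝ) * (Nat.factorial m : ℝ)) +
      ∑ i ∈ Finset.Icc 1 m, (1 : ℝ) / (Nat.factorial i : ℝ) := by
    have : 0 ≤ ∑ i ∈ Finset.Icc 1 m, (1 : ℝ) / (Nat.factorial i : ℝ) :=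
      Finset.sum_nonneg fun i _ => by positivity
    linarith
  constructor
  · unfold gairing
    rw [hmn]
    rw [show (1:ℕ)-1 = 0 from rfl, Nat.factorial_zero, Nat.cast_one, one_mul]
    exact div_self (ne_of_gt hD)
  · intro j hj hjn
    obtain ⟨k, rfl⟩ : ∃ k, j = k + 1 := ⟨j - 1, by omega⟩
    have hkm : k + 1 ≤ m := by omega
    unfold gairing
    rw [hmn]
    simp only [Nat.add_sub_cancel]
    rw [div_le_div_iff₀ hD hD]
    have hsplit : ∑ i ∈ Finset.Icc (k + 1) m, (1 : ℝ) / (Nat.factorial i : ℝ) =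
        1 / (Nat.factorial (k + 1) : ℝ) +
          ∑ i ∈ Finset.Icc (k + 1 + 1) m, (1 : ℝ) / (Nat.factorial i : ℝ) := by
      rw [← Finset.Ioc_insert_left hkm, Finset.sum_insert Finset.left_notMem_Ioc,
        Finset.Icc_add_one_left_eq_Ioc]
    have hkey := gairing_key (k + 1) (by omega) m hkm
    have hS : 0 ≤ ∑ i ∈ Finset.Icc (k + 1 + 1) m, (1 : ℝ) / (Nat.factorial i : ℝ) :=
      Finset.sum_nonneg fun i _ => by positivity
    set a := 1 / ((m : ℝ) * (Nat.factorial m : ℝ)) +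
        ∑ i ∈ Finset.Icc (k + 1 + 1) m, (1 : ℝ) / (Nat.factorial i : ℝ) with ha
    have ha0 : 0 ≤ a := by rw [ha]; linarith
    have hfk : (1 : ℝ) ≤ (Nat.factorial k : ℝ) := by
      exact_mod_cast Nat.one_le_iff_ne_zero.mpr (Nat.factorial_ne_zero k)
    have hfact : (Nat.factorial (k + 1) : ℝ) = ((k : ℝ) + 1) * (Nat.factorial k : ℝ) := by
      rw [Nat.factorial_succ]; push_cast; ring
    have hfk1 : (0 : ℝ) < (Nat.factorial (k + 1) : ℝ) := by
      rw [hfact]; positivity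
    have hcast : ((k + 1 : ℕ) : ℝ) = (k : ℝ) + 1 := by push_cast; ring
    rw [hcast] at hkey
    have hmain : (Nat.factorial (k + 1) : ℝ) * a ≤
        (Nat.factorial k : ℝ) * (1 / (Nat.factorial (k + 1) : ℝ) + a) := by
      have h1 : a * (((k : ℝ) + 1) * (Nat.factorial (k + 1) : ℝ)) ≤ 1 :=
        (le_div_iff₀ (by positivity)).mp hkey
      rw [hfact] at h1 ⊢
      have hx0 : (0:ℝ) ≤ (k:ℝ) := Nat.cast_nonneg k
      have hf0 : (0:ℝ) < (Nat.factorial k : ℝ) := by linarith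
      have hdiv : (Nat.factorial k : ℝ) / (((k:ℝ)+1) * (Nat.factorial k : ℝ)) = 1/((k:ℝ)+1) := by
        rw [mul_comm, div_mul_eq_div_div, div_self (ne_of_gt hf0)]
      have e : (Nat.factorial k : ℝ) * (1/(((k:ℝ)+1) * (Nat.factorial k : ℝ)) + a) =
          1/((k:ℝ)+1) + (Nat.factorial k : ℝ) * a := by
        rw [mul_add, mul_one_div, hdiv]
      rw [e]
      have key3 : (Nat.factorial k : ℝ) * (k:ℝ) * a ≤ 1/((k:ℝ)+1) := by
        rw [le_div_iff₀ (by positivity)]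
        nlinarith [h1, mul_nonneg (mul_nonneg ha0 hf0.le) (by linarith : (0:ℝ) ≤ (k:ℝ)+1)]
      nlinarith [key3]
    calc (Nat.factorial (k + 1) : ℝ) *
          (1 / ((m : ℝ) * (Nat.factorial m : ℝ)) +
            ∑ i ∈ Finset.Icc (k + 1 + 1) m, (1 : ℝ) / (Nat.factorial i : ℝ)) *
          (1 / ((m : ℝ) * (Nat.factorial m : ℝ)) +
            ∑ i ∈ Finset.Icc 1 m, (1 : ℝ) / (Nat.factorial i : ℝ))
        = (Nat.factorial (k + 1) : ℝ) * a *
          (1 / ((m : ℝ) * (Nat.factorial m : ℝ)) +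
            ∑ i ∈ Finset.Icc 1 m, (1 : ℝ) / (Nat.factorial i : ℝ)) := by rw [ha]
      _ ≤ (Nat.factorial k : ℝ) * (1 / (Nat.factorial (k + 1) : ℝ) + a) *
          (1 / ((m : ℝ) * (Nat.factorial m : ℝ)) +
            ∑ i ∈ Finset.Icc 1 m, (1 : ℝ) / (Nat.factorial i : ℝ)) := by
            exact mul_le_mul_of_nonneg_right hmain (le_of_lt hD)
      _ = (Nat.factorial k : ℝ) *
          (1 / ((m : ℝ) * (Nat.factorial m : ℝ)) +
            ∑ i ∈ Finset.Icc (k + 1) m, (1 : ℝ) / (Nat.factorial i : ℝ)) *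
          (1 / ((m : ℝ) * (Nat.factorial m : ℝ)) +
            ∑ i ∈ Finset.Icc 1 m, (1 : ℝ) / (Nat.factorial i : ℝ)) := by
            rw [hsplit, ha]; ring
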